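/- Majorization descent lemma: suppose J, R: ℝᵐ → ℝ with R convex, and z₊ minimizes the function z ↦ J(z_n) + ⟨z − z_n, ∇J(z_n)⟩ + (1/(2τ))‖z − z_n‖²_H + R(z) over a closed convex set C containing z_n, where H is symmetric positive definite and τ > 0. If additionally J(z₊) ≤ J(z_n) + ⟨z₊ − z_n, ∇J(z_n)⟩ + (1/(2τ))‖z₊ − z_n‖²_H, then (J+R)(z_n) − (J+R)(z₊) ≥ (1/(2τ))‖z_n − z₊‖²_H. -/

import Mathlib

open scoped RealInnerProductSpace

/-- Majorization descent lemma for the forward-backward subproblem. -/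
theorem stmt6 {m : ℕ} (J R : EuclideanSpace ℝ (Fin m) → ℝ)
    (hR : ConvexOn ℝ Set.univ R)
    (H : Matrix (Fin m) (Fin m) ℝ) (hHsymm : H.IsSymm)
    (hHpd : ∀ v : EuclideanSpace ℝ (Fin m), v ≠ 0 → 0 < ∑ i, ∑ j, v i * H i j * v j)
    (τ : ℝ) (hτ : 0 < τ)
    (C : Set (EuclideanSpace ℝ (Fin m))) (hCclosed : IsClosed C) (hCconv : Convex ℝ C)
    (zn : EuclideanSpace ℝ (Fin m)) (hzn : zn ∈ C)
    (g : EuclideanSpace ℝ (Fin m)) (hg : HasGradientAt J g zn)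
    (zp : EuclideanSpace ℝ (Fin m)) (hzp : zp ∈ C)
    (hmin : ∀ z ∈ C,
      J zn + ⟪zp - zn, g⟫ + (1 / (2 * τ)) * (∑ i, ∑ j, (zp - zn) i * H i j * (zp - zn) j)
          + R zp ≤
        J zn + ⟪z - zn, g⟫ + (1 / (2 * τ)) * (∑ i, ∑ j, (z - zn) i * H i j * (z - zn) j)
          + R z)
    (hmaj : J zp ≤
      J zn + ⟪zp - zn, g⟫ +
        (1 / (2 * τ)) * (∑ i, ∑ j, (zp - zn) i * H i j * (zp - zn) j)) :
    (1 / (2 * τ)) * (∑ i, ∑ j, (zn - zp) i * H i j * (zn - zp) j) ≤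
      (J zn + R zn) - (J zp + R zp) := by
  set d : EuclideanSpace ℝ (Fin m) := zp - zn with hd
  set Q : ℝ := ∑ i, ∑ j, d i * H i j * d j with hQ
  have hQflip : (∑ i, ∑ j, (zn - zp) i * H i j * (zn - zp) j) = Q := by
    rw [hQ]
    refine Finset.sum_congr rfl fun i _ => Finset.sum_congr rfl fun j _ => ?_
    have h1 : (zn - zp) i = -(d i) := by simp [hd]
    have h2 : (zn - zp) j = -(d j) := by simp [hd]
    rw [h1, h2]; ring
  -- key inequality for every t ∈ (0,1]
  have key : ∀ t : ℝ, t ∈ Set.Ioc (0:ℝ) 1 →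
      ⟪d, g⟫ + (1 / (2 * τ)) * ((2 - t) * Q) + R zp ≤ R zn := by
    intro t ht
    obtain ⟨ht0, ht1⟩ := ht
    set zt : EuclideanSpace ℝ (Fin m) := t • zn + (1 - t) • zp with hzt
    have hztC : zt ∈ C := hCconv hzn hzp (le_of_lt ht0) (by linarith) (by ring)
    have hdiff : zt - zn = (1 - t) • d := by
      rw [hzt, hd]
      module
    have hinner : ⟪zt - zn, g⟫ = (1 - t) * ⟪d, g⟫ := by
      rw [hdiff, real_inner_smul_left]
    have hquad : (∑ i, ∑ j, (zt - zn) i * H i j * (zt - zn) j) = (1 - t)^2 * Q := by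
      rw [hQ, Finset.mul_sum]
      refine Finset.sum_congr rfl fun i _ => ?_
      rw [Finset.mul_sum]
      refine Finset.sum_congr rfl fun j _ => ?_
      have h1 : (zt - zn) i = (1 - t) * d i := by rw [hdiff]; simp
      have h2 : (zt - zn) j = (1 - t) * d j := by rw [hdiff]; simp
      rw [h1, h2]; ring
    have hRconv : R zt ≤ t * R zn + (1 - t) * R zp := by
      have := hR.2 (Set.mem_univ zn) (Set.mem_univ zp) (le_of_lt ht0)
        (by linarith : (0:ℝ) ≤ 1 - t) (by ring)
      simpa [hzt] using this
    have h := hmin zt hztC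
    rw [hinner, hquad] at h
    have hτ' : 0 < 1 / (2 * τ) := by positivity
    -- from h and hRconv:
    -- ⟪d,g⟫ + c*Q + R zp ≤ (1-t)⟪d,g⟫ + c*(1-t)^2*Q + t R zn + (1-t) R zp
    have h2 : t * ⟪d, g⟫ + (1 / (2 * τ)) * (t * (2 - t) * Q) + t * R zp ≤ t * R zn := by
      nlinarith [h, hRconv]
    have := mul_le_mul_of_nonneg_left h2 (le_of_lt (inv_pos.mpr ht0))
    have ht0' : t ≠ 0 := ne_of_gt ht0
    calc ⟪d, g⟫ + (1 / (2 * τ)) * ((2 - t) * Q) + R zp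
        = t⁻¹ * (t * ⟪d, g⟫ + (1 / (2 * τ)) * (t * (2 - t) * Q) + t * R zp) := by
          field_simp
      _ ≤ t⁻¹ * (t * R zn) := this
      _ = R zn := by field_simp
  -- take the limit t → 0⁺
  have hlim : ⟪d, g⟫ + (1 / τ) * Q + R zp ≤ R zn := by
    have htend : Filter.Tendsto (fun t : ℝ => ⟪d, g⟫ + (1 / (2 * τ)) * ((2 - t) * Q) + R zp)
        (nhdsWithin 0 (Set.Ioi 0)) (nhds (⟪d, g⟫ + (1 / τ) * Q + R zp)) := by
      have : Filter.Tendsto (fun t : ℝ => ⟪d, g⟫ + (1 / (2 * τ)) * ((2 - t) * Q) + R zp)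
          (nhds 0) (nhds (⟪d, g⟫ + (1 / (2 * τ)) * ((2 - 0) * Q) + R zp)) := by
        exact (((((tendsto_const_nhds.sub Filter.tendsto_id).mul_const Q).const_mul
          (1 / (2 * τ))).const_add _).add tendsto_const_nhds)
      have heq : ⟪d, g⟫ + (1 / (2 * τ)) * ((2 - (0:ℝ)) * Q) + R zp
          = ⟪d, g⟫ + (1 / τ) * Q + R zp := by
        field_simp; ring
      rw [heq] at this
      exact this.mono_left nhdsWithin_le_nhds
    refine le_of_tendsto htend ?_
    have : Set.Ioc (0:ℝ) 1 ∈ nhdsWithin (0:ℝ) (Set.Ioi 0) :=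
      Ioc_mem_nhdsGT_of_mem (by constructor <;> norm_num)
    exact Filter.eventually_of_mem this key
  -- combine with hmaj
  have hQnn : 0 ≤ Q := by
    by_cases hdz : d = 0
    · simp [hQ, hdz]
    · exact le_of_lt (hHpd d hdz)
  rw [hQflip]
  have hmaj' : J zp ≤ J zn + ⟪d, g⟫ + (1 / (2 * τ)) * Q := hmaj
  have h1τ : (1 / τ) = 2 * (1 / (2 * τ)) := by field_simp
  nlinarith [hlim, hmaj']
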